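/- arXiv:2307.00582 — 6 statements merged into one kernel-verified Lean document; each statement's English description precedes it below -/
import Mathlib

section
/- Let M, C, K be real symmetric n×n matrices with M positive definite, and suppose the quadratic pencil P(λ) = λ²M + λC + K has 2n eigenpairs (λᵢ, xᵢ) collected in Λ = diag(λ₁,…,λ_{2n}) and X = [x₁,…,x_{2n}]. Then Λ Xᵀ M X Λ − Xᵀ K X is a diagonal matrix. -/
open Matrix

/-- Complexification of a real matrix. -/
def mc {n m : ℕ} (A : Matrix (Fin n) (Fin m) ℝ) : Matrix (Fin n) (Fin m) ℂ :=
  A.map Complex.ofReal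

theorem stmt_0 (n : ℕ) (M C K : Matrix (Fin n) (Fin n) ℝ)
    (hM : M.IsSymm) (hC : C.IsSymm) (hK : K.IsSymm) (hMpd : M.PosDef)
    (lam : Fin (2 * n) → ℂ) (hdist : Function.Injective lam)
    (X : Matrix (Fin n) (Fin (2 * n)) ℂ)
    (heig : ∀ i, ((lam i) ^ 2 • mc M + lam i • mc C + mc K) *ᵥ (fun r => X r i) = 0) :
    (Matrix.diagonal lam * Xᵀ * mc M * X * Matrix.diagonal lam - Xᵀ * mc K * X).IsDiag := by
  have hrep : ∀ (A : Matrix (Fin n) (Fin n) ℝ) (p q : Fin (2 * n)),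
      (Xᵀ * mc A * X) p q = (fun r => X r p) ⬝ᵥ (mc A *ᵥ fun r => X r q) := by
    intro A p q
    simp only [Matrix.mul_apply, Matrix.transpose_apply, Matrix.mulVec, dotProduct,
      Finset.sum_mul, Finset.mul_sum]
    rw [Finset.sum_comm]
    exact Finset.sum_congr rfl fun s _ => Finset.sum_congr rfl fun r _ => by ring
  have hsym : ∀ (A : Matrix (Fin n) (Fin n) ℝ), A.IsSymm → ∀ p q : Fin (2 * n),
      (Xᵀ * mc A * X) p q = (Xᵀ * mc A * X) q p := by
    intro A hA p q
    simp only [Matrix.mul_apply, Matrix.transpose_apply, Finset.sum_mul]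
    rw [Finset.sum_comm]
    refine Finset.sum_congr rfl fun s _ => Finset.sum_congr rfl fun r _ => ?_
    have h : A s r = A r s := hA.apply r s
    simp only [mc, Matrix.map_apply, h]
    ring
  have hquad : ∀ p q : Fin (2 * n),
      lam q ^ 2 * (Xᵀ * mc M * X) p q + lam q * (Xᵀ * mc C * X) p q
        + (Xᵀ * mc K * X) p q = 0 := by
    intro p q
    have h := congrArg (fun v => (fun r => X r p) ⬝ᵥ v) (heig q)
    simp only [dotProduct_zero] at h
    rw [hrep, hrep, hrep, ← h]
    simp [Matrix.add_mulVec, Matrix.smul_mulVec, dotProduct_add, dotProduct_smul,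
      smul_eq_mul]
    try ring
  intro i j hij
  have hne : lam i ≠ lam j := fun h => hij (hdist h)
  have hi := hquad j i
  have hj := hquad i j
  rw [hsym M hM j i, hsym C hC j i, hsym K hK j i] at hi
  have h1 : (lam i + lam j) * (Xᵀ * mc M * X) i j + (Xᵀ * mc C * X) i j = 0 := by
    have hd : lam j - lam i ≠ 0 := sub_ne_zero.mpr (Ne.symm hne)
    apply mul_left_cancel₀ hd
    rw [mul_zero]
    linear_combination hj - hi
  have hentry : (Matrix.diagonal lam * Xᵀ * mc M * X * Matrix.diagonal lam
      - Xᵀ * mc K * X) i j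
      = lam i * (Xᵀ * mc M * X) i j * lam j - (Xᵀ * mc K * X) i j := by
    rw [Matrix.sub_apply, Matrix.mul_diagonal, Matrix.mul_assoc, Matrix.mul_assoc,
      ← Matrix.mul_assoc (Xᵀ), Matrix.diagonal_mul]
  rw [hentry]
  linear_combination lam j * h1 - hj
end

section
/- Let M, C, K be real symmetric n×n matrices with M positive definite, and suppose the quadratic pencil P(λ) = λ²M + λC + K has 2n eigenpairs (λᵢ, xᵢ) with Λ = diag(λ₁,…,λ_{2n}), X = [x₁,…,x_{2n}]. Then Λ Xᵀ C X Λ + Λ Xᵀ K X + Xᵀ K X Λ is a diagonal matrix. -/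
open Matrix

lemma entry_dot {n m : ℕ} (B : Matrix (Fin n) (Fin n) ℂ) (X : Matrix (Fin n) (Fin m) ℂ)
    (i j : Fin m) :
    (Xᵀ * B * X) i j = (fun r => X r i) ⬝ᵥ (B *ᵥ fun s => X s j) := by
  simp only [Matrix.mul_apply, mulVec, dotProduct, transpose_apply, Finset.mul_sum,
    Finset.sum_mul]
  rw [Finset.sum_comm]
  apply Finset.sum_congr rfl
  intro r _
  apply Finset.sum_congr rfl
  intro s _
  ring

lemma mc_symm {n : ℕ} {A : Matrix (Fin n) (Fin n) ℝ} (hA : A.IsSymm) : (mc A).IsSymm := by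
  unfold mc
  rw [Matrix.IsSymm, ← Matrix.transpose_map, hA]

lemma sand_symm {n m : ℕ} {B : Matrix (Fin n) (Fin n) ℂ} (hB : B.IsSymm)
    (X : Matrix (Fin n) (Fin m) ℂ) : (Xᵀ * B * X).IsSymm := by
  rw [Matrix.IsSymm, Matrix.transpose_mul, Matrix.transpose_mul, Matrix.transpose_transpose,
    hB, Matrix.mul_assoc]

theorem stmt_1 (n : ℕ) (M C K : Matrix (Fin n) (Fin n) ℝ)
    (hM : M.IsSymm) (hC : C.IsSymm) (hK : K.IsSymm) (hMpd : M.PosDef)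
    (lam : Fin (2 * n) → ℂ) (hdist : Function.Injective lam)
    (X : Matrix (Fin n) (Fin (2 * n)) ℂ)
    (heig : ∀ i, ((lam i) ^ 2 • mc M + lam i • mc C + mc K) *ᵥ (fun r => X r i) = 0) :
    (Matrix.diagonal lam * Xᵀ * mc C * X * Matrix.diagonal lam + Matrix.diagonal lam * (Xᵀ * mc K * X) + Xᵀ * mc K * X * Matrix.diagonal lam).IsDiag := by
  -- basic scalar equations
  have key : ∀ i j : Fin (2 * n),
      lam j ^ 2 * (Xᵀ * mc M * X) i j + lam j * (Xᵀ * mc C * X) i j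
        + (Xᵀ * mc K * X) i j = 0 := by
    intro i j
    have h : (fun r => X r i) ⬝ᵥ (((lam j) ^ 2 • mc M + lam j • mc C + mc K) *ᵥ
        (fun r => X r j)) = 0 := by
      rw [heig j, dotProduct_zero]
    rw [add_mulVec, add_mulVec, smul_mulVec, smul_mulVec, dotProduct_add,
      dotProduct_add, dotProduct_smul, dotProduct_smul, smul_eq_mul, smul_eq_mul] at h
    rw [entry_dot, entry_dot, entry_dot]
    exact h
  intro i j hij
  have hne : lam i ≠ lam j := fun h => hij (hdist h)
  -- symmetric sandwiches
  have hSM := sand_symm (mc_symm hM) X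
  have hSC := sand_symm (mc_symm hC) X
  have hSK := sand_symm (mc_symm hK) X
  set m := (Xᵀ * mc M * X) i j with hm
  set c := (Xᵀ * mc C * X) i j with hc
  set k := (Xᵀ * mc K * X) i j with hk
  have eq2 : lam j ^ 2 * m + lam j * c + k = 0 := key i j
  have eq1 : lam i ^ 2 * m + lam i * c + k = 0 := by
    have h := key j i
    rw [hSM.apply, hSC.apply, hSK.apply] at h
    exact h
  have eq3 : (lam i + lam j) * m + c = 0 := by
    have h : (lam i - lam j) * ((lam i + lam j) * m + c) = 0 := by
      linear_combination eq1 - eq2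
    exact (mul_eq_zero.mp h).resolve_left (sub_ne_zero.mpr hne)
  -- compute the entry
  have entry : (Matrix.diagonal lam * Xᵀ * mc C * X * Matrix.diagonal lam
      + Matrix.diagonal lam * (Xᵀ * mc K * X) + Xᵀ * mc K * X * Matrix.diagonal lam) i j
      = lam i * c * lam j + lam i * k + k * lam j := by
    have hassoc : Matrix.diagonal lam * Xᵀ * mc C * X * Matrix.diagonal lam
        = Matrix.diagonal lam * (Xᵀ * mc C * X) * Matrix.diagonal lam := by
      simp [Matrix.mul_assoc]
    rw [hassoc]
    simp [Matrix.add_apply, Matrix.mul_diagonal, Matrix.diagonal_mul, hc, hk]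
  rw [entry]
  linear_combination lam j * eq1 + lam i * eq2 - lam i * lam j * eq3
end

section
/- Let M, C, K be real symmetric n×n matrices with M positive definite, and suppose the quadratic pencil P(λ) = λ²M + λC + K has 2n eigenpairs (λᵢ, xᵢ) with Λ = diag(λ₁,…,λ_{2n}), X = [x₁,…,x_{2n}]. Then Λ Xᵀ M X + Xᵀ M X Λ + Xᵀ C X is a diagonal matrix. -/
open Matrix

lemma entry_eq {n m : ℕ} (A : Matrix (Fin n) (Fin n) ℂ) (X : Matrix (Fin n) (Fin m) ℂ)
    (i j : Fin m) :
    (Xᵀ * A * X) i j = (fun r => X r i) ⬝ᵥ (A *ᵥ fun r => X r j) := by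
  simp only [Matrix.mul_apply, Matrix.mulVec, dotProduct, Matrix.transpose_apply,
    Finset.mul_sum, Finset.sum_mul]
  rw [Finset.sum_comm]
  apply Finset.sum_congr rfl; intro s _
  apply Finset.sum_congr rfl; intro r _
  ring

lemma dot_symm {n : ℕ} {A : Matrix (Fin n) (Fin n) ℂ} (hA : A.IsSymm)
    (x y : Fin n → ℂ) : x ⬝ᵥ (A *ᵥ y) = y ⬝ᵥ (A *ᵥ x) := by
  rw [Matrix.dotProduct_mulVec]
  nth_rewrite 1 [← hA]
  rw [Matrix.vecMul_transpose, dotProduct_comm]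

theorem stmt_2 (n : ℕ) (M C K : Matrix (Fin n) (Fin n) ℝ)
    (hM : M.IsSymm) (hC : C.IsSymm) (hK : K.IsSymm) (hMpd : M.PosDef)
    (lam : Fin (2 * n) → ℂ) (hdist : Function.Injective lam)
    (X : Matrix (Fin n) (Fin (2 * n)) ℂ)
    (heig : ∀ i, ((lam i) ^ 2 • mc M + lam i • mc C + mc K) *ᵥ (fun r => X r i) = 0) :
    (Matrix.diagonal lam * (Xᵀ * mc M * X) + Xᵀ * mc M * X * Matrix.diagonal lam + Xᵀ * mc C * X).IsDiag := by
  intro i j hij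
  have hlam : lam i ≠ lam j := fun h => hij (hdist h)
  set xi : Fin n → ℂ := fun r => X r i with hxi
  set xj : Fin n → ℂ := fun r => X r j with hxj
  have key : ∀ a b : Fin (2 * n),
      (lam b) ^ 2 * ((fun r => X r a) ⬝ᵥ (mc M *ᵥ fun r => X r b))
        + lam b * ((fun r => X r a) ⬝ᵥ (mc C *ᵥ fun r => X r b))
        + ((fun r => X r a) ⬝ᵥ (mc K *ᵥ fun r => X r b)) = 0 := by
    intro a b
    have h := congrArg (fun v => (fun r => X r a) ⬝ᵥ v) (heig b)
    simpa [Matrix.add_mulVec, Matrix.smul_mulVec, dotProduct_add,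
      dotProduct_smul, smul_eq_mul] using h
  have h1 := key i j
  have h2 := key j i
  rw [dot_symm (mc_symm hM), dot_symm (mc_symm hC), dot_symm (mc_symm hK)] at h2
  set m := xi ⬝ᵥ (mc M *ᵥ xj)
  set c := xi ⬝ᵥ (mc C *ᵥ xj)
  simp only [Matrix.add_apply, Matrix.mul_apply, Matrix.diagonal_apply]
  have goal_eq : (Matrix.diagonal lam * (Xᵀ * mc M * X)) i j
      + (Xᵀ * mc M * X * Matrix.diagonal lam) i j + (Xᵀ * mc C * X) i j
      = lam i * m + m * lam j + c := by
    simp only [Matrix.diagonal_mul, Matrix.mul_diagonal, entry_eq]; rfl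
  have hsub : (lam j - lam i) * ((lam i + lam j) * m + c) = 0 := by
    have := sub_eq_zero.mpr (h1.trans h2.symm)
    calc (lam j - lam i) * ((lam i + lam j) * m + c)
        = ((lam j) ^ 2 * m + lam j * c + xi ⬝ᵥ (mc K *ᵥ xj))
          - ((lam i) ^ 2 * m + lam i * c + xi ⬝ᵥ (mc K *ᵥ xj)) := by ring
      _ = 0 := this
  have hz : (lam i + lam j) * m + c = 0 := by
    rcases mul_eq_zero.mp hsub with h | h
    · exact absurd (sub_eq_zero.mp h) (Ne.symm hlam)
    · exact h
  have : (Matrix.diagonal lam * (Xᵀ * mc M * X)) i j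
      + (Xᵀ * mc M * X * Matrix.diagonal lam) i j + (Xᵀ * mc C * X) i j = 0 := by
    rw [goal_eq]; linear_combination hz
  simp only [Matrix.diagonal_mul, Matrix.mul_diagonal] at this
  simpa [Matrix.add_apply, Matrix.mul_apply] using this
end

section
/- Let λ₁,…,λ_p and μ₁,…,μ_p be 2p pairwise distinct complex numbers. Then the p×p Cauchy matrix Ĥ with entries Ĥ_{ij} = 1/(μⱼ − λᵢ) is invertible, and its inverse T has entries t_{ij} = [∏_{k=1}^p (λⱼ − μ_k) · ∏_{k=1}^p (μᵢ − λ_k)] / [(λⱼ − μᵢ) · ∏_{k≠i} (μᵢ − μ_k) · ∏_{k≠j} (λⱼ − λ_k)]. -/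
open Matrix

/-- Lagrange interpolation in "sum" form: for an injective node map `v` and a
polynomial `f` of degree `< p`, evaluating at any point `x` is given by the
Lagrange sum. -/
lemma lag_sum {p : ℕ} (v : Fin p → ℂ) (hv : Function.Injective v)
    (f : Polynomial ℂ) (hf : f.degree < (p : WithBot ℕ)) (x : ℂ) :
    ∑ l, f.eval (v l) * ((∏ k ∈ Finset.univ.erase l, (x - v k)) /
      ∏ k ∈ Finset.univ.erase l, (v l - v k)) = f.eval x := by
  have hvs : Set.InjOn v (Finset.univ : Finset (Fin p)) := hv.injOn
  have hcard : ((Finset.univ : Finset (Fin p)).card : WithBot ℕ) = (p : WithBot ℕ) := by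
    simp
  conv_rhs => rw [Lagrange.eq_interpolate (f := f) hvs (by rw [hcard]; exact hf)]
  rw [Lagrange.interpolate_apply, Polynomial.eval_finset_sum]
  refine Finset.sum_congr rfl fun l _ => ?_
  rw [Polynomial.eval_mul, Polynomial.eval_C]
  congr 1
  rw [Lagrange.basis, Polynomial.eval_prod, div_eq_mul_inv, ← Finset.prod_inv_distrib,
    ← Finset.prod_mul_distrib]
  refine Finset.prod_congr rfl fun k _ => ?_
  simp [Lagrange.basisDivisor, mul_comm]

theorem stmt_4 (p : ℕ) (lam mu : Fin p → ℂ)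
    (hdist : Function.Injective (Sum.elim lam mu : Fin p ⊕ Fin p → ℂ)) :
    IsUnit (Matrix.of (fun i j => 1 / (mu j - lam i)) : Matrix (Fin p) (Fin p) ℂ).det ∧
    (Matrix.of (fun i j => 1 / (mu j - lam i)) : Matrix (Fin p) (Fin p) ℂ)⁻¹ =
      Matrix.of (fun i j : Fin p =>
        ((∏ k, (lam j - mu k)) * ∏ k, (mu i - lam k)) /
          ((lam j - mu i) * (∏ k ∈ Finset.univ.erase i, (mu i - mu k)) *
            ∏ k ∈ Finset.univ.erase j, (lam j - lam k))) := by
  have hl : Function.Injective lam := fun a b h => by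
    have := hdist (a₁ := Sum.inl a) (a₂ := Sum.inl b) (by simpa using h)
    simpa using this
  have hm : Function.Injective mu := fun a b h => by
    have := hdist (a₁ := Sum.inr a) (a₂ := Sum.inr b) (by simpa using h)
    simpa using this
  have hlm : ∀ a b, lam a ≠ mu b := fun a b h => by
    have := hdist (a₁ := Sum.inl a) (a₂ := Sum.inr b) (by simpa using h)
    simp at this
  have key : (Matrix.of (fun i j => 1 / (mu j - lam i)) : Matrix (Fin p) (Fin p) ℂ) *
      Matrix.of (fun i j : Fin p =>
        ((∏ k, (lam j - mu k)) * ∏ k, (mu i - lam k)) /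
          ((lam j - mu i) * (∏ k ∈ Finset.univ.erase i, (mu i - mu k)) *
            ∏ k ∈ Finset.univ.erase j, (lam j - lam k))) = 1 := by
    ext i j
    rw [Matrix.mul_apply, Matrix.one_apply]
    simp only [Matrix.of_apply]
    -- the auxiliary polynomial
    set q : Polynomial ℂ := ∏ k ∈ Finset.univ.erase j, (Polynomial.X - Polynomial.C (lam k))
      with hqdef
    have hq : ∀ t : ℂ, q.eval t = ∏ k ∈ Finset.univ.erase j, (t - lam k) := by
      intro t; simp [hqdef, Polynomial.eval_prod]
    have hqdeg : q.degree < (p : WithBot ℕ) := by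
      rw [hqdef, Polynomial.degree_prod]
      simp only [Polynomial.degree_X_sub_C]
      rw [Finset.sum_const, Finset.card_erase_of_mem (Finset.mem_univ j), Finset.card_univ,
        Fintype.card_fin, nsmul_eq_mul, mul_one]
      exact_mod_cast Nat.sub_lt (Nat.pos_of_ne_zero (by rintro rfl; exact j.elim0)) one_pos
    have hD : (∏ k ∈ Finset.univ.erase j, (lam j - lam k)) ≠ 0 := by
      rw [Finset.prod_ne_zero_iff]
      intro k hk
      exact sub_ne_zero.mpr (fun h => (Finset.mem_erase.mp hk).1 (hl h).symm)
    have hN : (∏ k, (lam j - mu k)) ≠ 0 := by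
      rw [Finset.prod_ne_zero_iff]
      exact fun k _ => sub_ne_zero.mpr (hlm j k)
    have hB : (∏ k, (lam i - mu k)) ≠ 0 := by
      rw [Finset.prod_ne_zero_iff]
      exact fun k _ => sub_ne_zero.mpr (hlm i k)
    have hstep : ∀ l : Fin p,
        (1 / (mu l - lam i)) *
          (((∏ k, (lam j - mu k)) * ∏ k, (mu l - lam k)) /
            ((lam j - mu l) * (∏ k ∈ Finset.univ.erase l, (mu l - mu k)) *
              ∏ k ∈ Finset.univ.erase j, (lam j - lam k))) =
        ((∏ k, (lam j - mu k)) / ((∏ k ∈ Finset.univ.erase j, (lam j - lam k)) *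
            ∏ k, (lam i - mu k))) *
          (q.eval (mu l) * ((∏ k ∈ Finset.univ.erase l, (lam i - mu k)) /
            ∏ k ∈ Finset.univ.erase l, (mu l - mu k))) := by
      intro l
      have hml : mu l - lam i ≠ 0 := sub_ne_zero.mpr (fun h => hlm i l h.symm)
      have hjl : lam j - mu l ≠ 0 := sub_ne_zero.mpr (hlm j l)
      have hQ : (∏ k ∈ Finset.univ.erase l, (mu l - mu k)) ≠ 0 := by
        rw [Finset.prod_ne_zero_iff]
        intro k hk
        exact sub_ne_zero.mpr (fun h => (Finset.mem_erase.mp hk).1 (hm h).symm)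
      have hA : (∏ k, (mu l - lam k)) =
          (mu l - lam j) * ∏ k ∈ Finset.univ.erase j, (mu l - lam k) :=
        (Finset.mul_prod_erase _ _ (Finset.mem_univ j)).symm
      have hBsplit : (∏ k, (lam i - mu k)) =
          (lam i - mu l) * ∏ k ∈ Finset.univ.erase l, (lam i - mu k) :=
        (Finset.mul_prod_erase _ _ (Finset.mem_univ l)).symm
      have hil : lam i - mu l ≠ 0 := sub_ne_zero.mpr (hlm i l)
      have hR : (∏ k ∈ Finset.univ.erase l, (lam i - mu k)) ≠ 0 := by
        rw [Finset.prod_ne_zero_iff]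
        exact fun k _ => sub_ne_zero.mpr (hlm i k)
      rw [hq, hA, hBsplit]
      field_simp
      ring
    rw [Finset.sum_congr rfl (fun l _ => hstep l), ← Finset.mul_sum,
      lag_sum mu hm q hqdeg (lam i)]
    by_cases hij : i = j
    · subst hij
      rw [hq, if_pos rfl]
      field_simp
    · rw [if_neg hij, hq]
      have : (∏ k ∈ Finset.univ.erase j, (lam i - lam k)) = 0 :=
        Finset.prod_eq_zero (Finset.mem_erase.mpr ⟨hij, Finset.mem_univ i⟩) (sub_self _)
      rw [this, mul_zero]
  exact ⟨Matrix.isUnit_det_of_right_inverse key, Matrix.inv_eq_right_inv key⟩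
end

section
/- Let λ₁,…,λ_p, μ₁,…,μ_p be pairwise distinct complex numbers and suppose bᵀxⱼ ≠ 0 for all j. Then the solution β = [β₁,…,β_p]ᵀ of the linear system βᵀH = 𝟙ᵀe^{τΣ₁}, where H = diag(bᵀx₁,…,bᵀx_p)·Ĥ with Ĥ_{ij} = 1/(μⱼ − λᵢ), is given explicitly by βⱼ = (1/(bᵀxⱼ)) · [∏_{k=1}^p (λⱼ − μ_k) / ∏_{k≠j} (λⱼ − λ_k)] · Σ_{i=1}^p [∏_{k=1}^p (μᵢ − λ_k)] e^{τμᵢ} / [(λⱼ − μᵢ) ∏_{k≠i} (μᵢ − μ_k)]. -/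
open Finset Polynomial

theorem sum_eval_div_prod_eq_zero {ι : Type*} [DecidableEq ι] (s : Finset ι) (v : ι → ℂ)
    (hv : Set.InjOn v s) (g : ℂ[X]) (hg : g.degree < ((s.card - 1 : ℕ) : WithBot ℕ)) :
    ∑ j ∈ s, g.eval (v j) / ∏ k ∈ s.erase j, (v j - v k) = 0 := by
  have hdeg : g.degree < (s.card : WithBot ℕ) :=
    hg.trans_le (by exact_mod_cast Nat.cast_le.mpr (s.card.sub_le 1))
  have heq := Lagrange.eq_interpolate hv hdeg
  have h0 : g.coeff (s.card - 1) = 0 := coeff_eq_zero_of_degree_lt hg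
  have hmain : ∑ j ∈ s, g.eval (v j) / ∏ k ∈ s.erase j, (v j - v k)
      = g.coeff (s.card - 1) := by
    conv_rhs => rw [heq, Lagrange.interpolate_apply]
    rw [finset_sum_coeff]
    refine Finset.sum_congr rfl fun j hj => ?_
    have hb : (Lagrange.basis s v j)
        = C (Lagrange.nodalWeight s v j) * Lagrange.nodal (s.erase j) v := by
      rw [Lagrange.basis_eq_prod_sub_inv_mul_nodal_div hj, Lagrange.nodal_erase_eq_nodal_div hj]
    have hmon : (Lagrange.nodal (s.erase j) v).Monic := Lagrange.nodal_monic
    have hnd : (Lagrange.nodal (s.erase j) v).natDegree = s.card - 1 := by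
      rw [Lagrange.natDegree_nodal, card_erase_of_mem hj]
    rw [coeff_C_mul, hb, coeff_C_mul, ← hnd, hmon.coeff_natDegree, mul_one,
      Lagrange.nodalWeight]
    rw [div_eq_mul_inv, ← prod_inv_distrib]
  rw [hmain, h0]

theorem cauchy_key {p : ℕ} (lam mu : Fin p → ℂ)
    (hlam : Function.Injective lam) (hmu : Function.Injective mu)
    (hlm : ∀ m k, lam m ≠ mu k) (l i : Fin p) :
    ∑ m, (∏ k, (lam m - mu k)) /
        ((∏ k ∈ Finset.univ.erase m, (lam m - lam k)) * ((mu l - lam m) * (lam m - mu i)))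
      = if i = l then (∏ k ∈ Finset.univ.erase l, (mu l - mu k)) / ∏ k, (mu l - lam k)
        else 0 := by
  classical
  have hD : ∀ m : Fin p, (∏ k ∈ Finset.univ.erase m, (lam m - lam k)) ≠ 0 := fun m =>
    Finset.prod_ne_zero_iff.mpr fun k hk =>
      sub_ne_zero.mpr fun h => (Finset.mem_erase.mp hk).1 (hlam h).symm
  have hlmne : ∀ m k, lam m - mu k ≠ 0 := fun m k => sub_ne_zero.mpr (hlm m k)
  have hnotmem : mu l ∉ Finset.image lam Finset.univ := by
    simp only [Finset.mem_image, Finset.mem_univ, true_and, not_exists]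
    exact fun m => hlm m l
  by_cases hil : i = l
  · subst hil
    set s : Finset ℂ := insert (mu i) (Finset.image lam Finset.univ) with hs
    have hcard : s.card = p + 1 := by
      rw [hs, Finset.card_insert_of_notMem hnotmem,
        Finset.card_image_of_injective _ hlam, Finset.card_univ, Fintype.card_fin]
    set g : ℂ[X] := Lagrange.nodal (Finset.univ.erase i) mu with hg
    have hgd : g.degree < ((s.card - 1 : ℕ) : WithBot ℕ) := by
      rw [hg, Lagrange.degree_nodal, Finset.card_erase_of_mem (Finset.mem_univ i),
        Finset.card_univ, Fintype.card_fin, hcard]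
      have hp : 1 ≤ p := i.pos
      norm_cast
      omega
    have h0 := sum_eval_div_prod_eq_zero s id (Set.injOn_id _) g hgd
    rw [hs, Finset.sum_insert hnotmem, Finset.sum_image
      (fun a _ b _ h => hlam h)] at h0
    have hterm1 : eval (id (mu i)) g / ∏ k ∈ (insert (mu i) (Finset.image lam Finset.univ)).erase (mu i), (id (mu i) - id k)
        = (∏ k ∈ Finset.univ.erase i, (mu i - mu k)) / ∏ k, (mu i - lam k) := by
      rw [Finset.erase_insert hnotmem, Finset.prod_image (fun a _ b _ h => hlam h)]
      simp [hg, Lagrange.eval_nodal]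
    rw [hterm1] at h0
    have hterm2 : ∀ m : Fin p,
        eval (id (lam m)) g / ∏ k ∈ (insert (mu i) (Finset.image lam Finset.univ)).erase (lam m), (id (lam m) - id k)
        = (∏ k ∈ Finset.univ.erase i, (lam m - mu k)) /
            ((lam m - mu i) * ∏ k ∈ Finset.univ.erase m, (lam m - lam k)) := by
      intro m
      rw [Finset.erase_insert_of_ne (hlm m i).symm, Finset.prod_insert (by
        simp only [Finset.mem_erase, not_and]
        exact fun _ => hnotmem), ← Finset.image_erase hlam,
        Finset.prod_image (fun a _ b _ h => hlam h)]
      simp [hg, Lagrange.eval_nodal]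
    rw [Finset.sum_congr rfl (fun m _ => hterm2 m)] at h0
    rw [if_pos rfl]
    have hstep : ∀ m : Fin p, (∏ k, (lam m - mu k)) /
        ((∏ k ∈ Finset.univ.erase m, (lam m - lam k)) * ((mu i - lam m) * (lam m - mu i)))
        = -((∏ k ∈ Finset.univ.erase i, (lam m - mu k)) /
            ((lam m - mu i) * ∏ k ∈ Finset.univ.erase m, (lam m - lam k))) := by
      intro m
      rw [← Finset.mul_prod_erase _ _ (Finset.mem_univ i)]
      have h1 := hlmne m i
      have hden : (∏ k ∈ Finset.univ.erase m, (lam m - lam k)) * ((mu i - lam m) * (lam m - mu i))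
          = -((lam m - mu i) * ((lam m - mu i) * ∏ k ∈ Finset.univ.erase m, (lam m - lam k))) := by
        ring
      rw [hden, div_neg, mul_div_mul_left _ _ h1]
    rw [Finset.sum_congr rfl (fun m _ => hstep m), sum_neg_distrib]
    linear_combination -h0
  · -- i ≠ l : the sum vanishes
    set g : ℂ[X] := Lagrange.nodal ((Finset.univ.erase l).erase i) mu with hg
    have himem : i ∈ Finset.univ.erase l := Finset.mem_erase.mpr ⟨hil, Finset.mem_univ i⟩
    have hgd : g.degree < (((Finset.image lam Finset.univ).card - 1 : ℕ) : WithBot ℕ) := by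
      rw [hg, Lagrange.degree_nodal, Finset.card_erase_of_mem himem,
        Finset.card_erase_of_mem (Finset.mem_univ l), Finset.card_univ, Fintype.card_fin,
        Finset.card_image_of_injective _ hlam, Finset.card_univ, Fintype.card_fin]
      have hp2 : 2 ≤ p := by
        have h1 : (i : ℕ) ≠ (l : ℕ) := fun h => hil (Fin.ext h)
        have := i.isLt; have := l.isLt; omega
      norm_cast
      omega
    have h0 := sum_eval_div_prod_eq_zero (Finset.image lam Finset.univ) id (Set.injOn_id _) g hgd
    rw [Finset.sum_image (fun a _ b _ h => hlam h)] at h0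
    have hterm : ∀ m : Fin p,
        eval (id (lam m)) g / ∏ k ∈ (Finset.image lam Finset.univ).erase (lam m), (id (lam m) - id k)
        = (∏ k ∈ (Finset.univ.erase l).erase i, (lam m - mu k)) /
            ∏ k ∈ Finset.univ.erase m, (lam m - lam k) := by
      intro m
      rw [← Finset.image_erase hlam, Finset.prod_image (fun a _ b _ h => hlam h)]
      simp [hg, Lagrange.eval_nodal]
    rw [Finset.sum_congr rfl (fun m _ => hterm m)] at h0
    rw [if_neg hil]
    have hstep : ∀ m : Fin p, (∏ k, (lam m - mu k)) /
        ((∏ k ∈ Finset.univ.erase m, (lam m - lam k)) * ((mu l - lam m) * (lam m - mu i)))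
        = -((∏ k ∈ (Finset.univ.erase l).erase i, (lam m - mu k)) /
            ∏ k ∈ Finset.univ.erase m, (lam m - lam k)) := by
      intro m
      rw [← Finset.mul_prod_erase _ _ (Finset.mem_univ l),
        ← Finset.mul_prod_erase _ _ himem]
      have h1 := hlmne m i
      have h2 := hlmne m l
      have hden : (∏ k ∈ Finset.univ.erase m, (lam m - lam k)) * ((mu l - lam m) * (lam m - mu i))
          = -((lam m - mu l) * ((lam m - mu i) * ∏ k ∈ Finset.univ.erase m, (lam m - lam k))) := by
        ring
      rw [hden, div_neg, mul_div_mul_left _ _ h2, mul_div_mul_left _ _ h1]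
    rw [Finset.sum_congr rfl (fun m _ => hstep m), sum_neg_distrib, h0, neg_zero]

open Matrix

/-- Complexification of a real vector. -/
def vc {n : ℕ} (v : Fin n → ℝ) : Fin n → ℂ := fun i => (v i : ℂ)

theorem stmt_16 (n p : ℕ) (lam mu : Fin p → ℂ)
    (hdist : Function.Injective (Sum.elim lam mu : Fin p ⊕ Fin p → ℂ))
    (b : Fin n → ℝ) (x : Fin p → Fin n → ℂ)
    (hb : ∀ j, vc b ⬝ᵥ x j ≠ 0)
    (τ : ℝ) (hτ : 0 < τ)
    (H : Matrix (Fin p) (Fin p) ℂ)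
    (hH : H = Matrix.diagonal (fun i => vc b ⬝ᵥ x i) *
      Matrix.of (fun i j : Fin p => 1 / (mu j - lam i)))
    (β : Fin p → ℂ)
    (hβ : Matrix.vecMul β H = fun j => Complex.exp (τ * mu j)) :
    ∀ j, β j = (1 / (vc b ⬝ᵥ x j)) *
      ((∏ k, (lam j - mu k)) / ∏ k ∈ Finset.univ.erase j, (lam j - lam k)) *
      ∑ i, (∏ k, (mu i - lam k)) * Complex.exp (τ * mu i) /
        ((lam j - mu i) * ∏ k ∈ Finset.univ.erase i, (mu i - mu k)) := by
  classical
  have hlam : Function.Injective lam := fun a c h => by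
    have := hdist (a₁ := Sum.inl a) (a₂ := Sum.inl c) (by simpa using h)
    simpa using this
  have hmu : Function.Injective mu := fun a c h => by
    have := hdist (a₁ := Sum.inr a) (a₂ := Sum.inr c) (by simpa using h)
    simpa using this
  have hlm : ∀ m k, lam m ≠ mu k := fun m k h => by
    have := hdist (a₁ := Sum.inl m) (a₂ := Sum.inr k) (by simpa using h)
    simp at this
  have hD : ∀ m : Fin p, (∏ k ∈ Finset.univ.erase m, (lam m - lam k)) ≠ 0 := fun m =>
    Finset.prod_ne_zero_iff.mpr fun k hk =>
      sub_ne_zero.mpr fun h => (Finset.mem_erase.mp hk).1 (hlam h).symm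
  have hQ : ∀ i : Fin p, (∏ k ∈ Finset.univ.erase i, (mu i - mu k)) ≠ 0 := fun i =>
    Finset.prod_ne_zero_iff.mpr fun k hk =>
      sub_ne_zero.mpr fun h => (Finset.mem_erase.mp hk).1 (hmu h).symm
  have hP : ∀ i : Fin p, (∏ k, (mu i - lam k)) ≠ 0 := fun i =>
    Finset.prod_ne_zero_iff.mpr fun k _ =>
      sub_ne_zero.mpr fun h => hlm k i h.symm
  have hlmne : ∀ m k, lam m - mu k ≠ 0 := fun m k => sub_ne_zero.mpr (hlm m k)
  have hmlne : ∀ k m, mu k - lam m ≠ 0 := fun k m => sub_ne_zero.mpr fun h => hlm m k h.symm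
  set d : Fin p → ℂ := fun j => vc b ⬝ᵥ x j with hd
  set K : Matrix (Fin p) (Fin p) ℂ := Matrix.of (fun i j : Fin p =>
    (1 / d j) * ((∏ k, (lam j - mu k)) / ∏ k ∈ Finset.univ.erase j, (lam j - lam k)) *
      ((∏ k, (mu i - lam k)) / ((lam j - mu i) * ∏ k ∈ Finset.univ.erase i, (mu i - mu k))))
    with hK
  have hKH : K * H = 1 := by
    ext i l
    rw [Matrix.mul_apply, hH]
    have hterm : ∀ m : Fin p, K i m *
        (Matrix.diagonal d * Matrix.of (fun i j : Fin p => 1 / (mu j - lam i))) m l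
        = ((∏ k, (mu i - lam k)) / ∏ k ∈ Finset.univ.erase i, (mu i - mu k)) *
          ((∏ k, (lam m - mu k)) /
            ((∏ k ∈ Finset.univ.erase m, (lam m - lam k)) * ((mu l - lam m) * (lam m - mu i)))) := by
      intro m
      rw [Matrix.diagonal_mul, hK]
      simp only [Matrix.of_apply]
      have h1 := hb m
      have h2 := hD m
      have h3 := hlmne m i
      have h4 := hmlne l m
      have h5 := hQ i
      rw [hd]
      field_simp
    rw [Finset.sum_congr rfl (fun m _ => hterm m), ← Finset.mul_sum,
      cauchy_key lam mu hlam hmu hlm l i]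
    by_cases hil : i = l
    · subst hil
      rw [if_pos rfl, Matrix.one_apply_eq]
      rw [div_mul_div_comm, mul_comm ((∏ k, (mu i - lam k))) _, div_self]
      exact mul_ne_zero (hQ i) (hP i)
    · rw [if_neg hil, Matrix.one_apply_ne hil, mul_zero]
  have hHK : H * K = 1 := mul_eq_one_comm.mp hKH
  have hβ' : β = Matrix.vecMul (fun j => Complex.exp (τ * mu j)) K := by
    calc β = Matrix.vecMul β 1 := (Matrix.vecMul_one β).symm
      _ = Matrix.vecMul β (H * K) := by rw [hHK]
      _ = Matrix.vecMul (Matrix.vecMul β H) K := (Matrix.vecMul_vecMul β H K).symm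
      _ = Matrix.vecMul (fun j => Complex.exp (τ * mu j)) K := by rw [hβ]
  intro j
  rw [hβ']
  show ∑ i, Complex.exp (τ * mu i) * K i j = _
  rw [hK]
  simp only [Matrix.of_apply]
  rw [Finset.mul_sum]
  refine Finset.sum_congr rfl fun i _ => ?_
  rw [hd]
  ring
end

section
/- Let λ₁,…,λ_p, μ₁,…,μ_p be pairwise distinct complex numbers. In the case τ = 0, the explicit solution βⱼ = (1/(bᵀxⱼ)) · [∏_{k=1}^p (λⱼ − μ_k)/∏_{k≠j}(λⱼ − λ_k)] · Σᵢ [∏_k (μᵢ − λ_k)]/[(λⱼ − μᵢ)∏_{k≠i}(μᵢ − μ_k)] simplifies to βⱼ = (1/(bᵀxⱼ)) (μⱼ − λⱼ) ∏_{k≠j} (λⱼ − μ_k)/(λⱼ − λ_k). -/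
open Matrix

open Finset Polynomial in
theorem stmt_17 (p : ℕ) (lam mu : Fin p → ℂ)
    (hdist : Function.Injective (Sum.elim lam mu : Fin p ⊕ Fin p → ℂ))
    (a : ℂ) (ha : a ≠ 0) (j : Fin p) :
    (1 / a) * ((∏ k, (lam j - mu k)) / ∏ k ∈ Finset.univ.erase j, (lam j - lam k)) *
        ∑ i, (∏ k, (mu i - lam k)) /
          ((lam j - mu i) * ∏ k ∈ Finset.univ.erase i, (mu i - mu k))
      = (1 / a) * (mu j - lam j) *
          ∏ k ∈ Finset.univ.erase j, ((lam j - mu k) / (lam j - lam k)) := by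
  -- distinctness facts
  have hlm : ∀ i k, lam i ≠ mu k := fun i k h => by
    have := hdist (a₁ := Sum.inl i) (a₂ := Sum.inr k) (by simpa using h)
    simp at this
  have hmu_inj : Function.Injective mu := fun i k h => by
    have := hdist (a₁ := Sum.inr i) (a₂ := Sum.inr k) (by simpa using h)
    simpa using this
  have hlam_inj : Function.Injective lam := fun i k h => by
    have := hdist (a₁ := Sum.inl i) (a₂ := Sum.inl k) (by simpa using h)
    simpa using this
  have hA : (∏ k, (lam j - mu k)) ≠ 0 :=
    Finset.prod_ne_zero_iff.2 fun k _ => sub_ne_zero_of_ne (hlm j k)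
  have hQ : (∏ k ∈ Finset.univ.erase j, (lam j - lam k)) ≠ 0 :=
    Finset.prod_ne_zero_iff.2 fun k hk =>
      sub_ne_zero_of_ne fun h => (Finset.mem_erase.1 hk).1 (hlam_inj h).symm
  have hD : ∀ i : Fin p, (∏ k ∈ Finset.univ.erase i, (mu i - mu k)) ≠ 0 := fun i =>
    Finset.prod_ne_zero_iff.2 fun k hk =>
      sub_ne_zero_of_ne fun h => (Finset.mem_erase.1 hk).1 (hmu_inj h).symm
  have hp : 0 < p := j.pos
  -- the polynomial f
  set f : ℂ[X] := (∏ k, (X - C (lam k))) - ∏ k, (X - C (mu k)) with hf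
  have hmon1 : (∏ k : Fin p, (X - C (lam k)) : ℂ[X]).Monic :=
    monic_prod_of_monic _ _ fun k _ => monic_X_sub_C _
  have hmon2 : (∏ k : Fin p, (X - C (mu k)) : ℂ[X]).Monic :=
    monic_prod_of_monic _ _ fun k _ => monic_X_sub_C _
  have hdeg1 : (∏ k : Fin p, (X - C (lam k)) : ℂ[X]).natDegree = p := by
    rw [natDegree_prod _ _ fun k _ => X_sub_C_ne_zero _]
    simp
  have hdeg2 : (∏ k : Fin p, (X - C (mu k)) : ℂ[X]).natDegree = p := by
    rw [natDegree_prod _ _ fun k _ => X_sub_C_ne_zero _]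
    simp
  have hfdeg : f.degree < (Finset.univ : Finset (Fin p)).card := by
    have h1 := Polynomial.degree_eq_natDegree hmon1.ne_zero
    have h2 := Polynomial.degree_eq_natDegree hmon2.ne_zero
    have := Polynomial.degree_sub_lt
      (p := ∏ k : Fin p, (X - C (lam k))) (q := ∏ k : Fin p, (X - C (mu k)))
      (by rw [h1, h2, hdeg1, hdeg2])
      hmon1.ne_zero (by rw [hmon1.leadingCoeff, hmon2.leadingCoeff])
    rw [h1, hdeg1] at this
    simpa using this
  have hmuinj : Set.InjOn mu (Finset.univ : Finset (Fin p)) := fun x _ y _ h => hmu_inj h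
  have hinterp := Lagrange.eq_interpolate (v := mu) hmuinj hfdeg
  -- evaluate at lam j
  have heval : f.eval (lam j) =
      ∑ i, (f.eval (mu i)) * ∏ k ∈ Finset.univ.erase i, ((mu i - mu k)⁻¹ * (lam j - mu k)) := by
    conv_lhs => rw [hinterp]
    rw [Lagrange.interpolate_apply, eval_finset_sum]
    refine Finset.sum_congr rfl fun i _ => ?_
    rw [eval_mul, eval_C, Lagrange.basis, eval_prod]
    congr 1
    refine Finset.prod_congr rfl fun k _ => ?_
    simp [Lagrange.basisDivisor]
  have hfl : f.eval (lam j) = -∏ k, (lam j - mu k) := by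
    simp only [hf, eval_sub, eval_prod, eval_sub, eval_X, eval_C]
    have : (∏ x : Fin p, (lam j - lam x)) = 0 := Finset.prod_eq_zero (Finset.mem_univ j) (by simp)
    rw [this]
    ring
  have hfm : ∀ i, f.eval (mu i) = ∏ k, (mu i - lam k) := fun i => by
    simp only [hf, eval_sub, eval_prod, eval_sub, eval_X, eval_C]
    have : (∏ x : Fin p, (mu i - mu x)) = 0 := Finset.prod_eq_zero (Finset.mem_univ i) (by simp)
    rw [this]
    ring
  -- the key sum identity
  have hsum : (∑ i, (∏ k, (mu i - lam k)) /
      ((lam j - mu i) * ∏ k ∈ Finset.univ.erase i, (mu i - mu k))) = -1 := by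
    have hstep : ∀ i : Fin p, (∏ k, (mu i - lam k)) /
        ((lam j - mu i) * ∏ k ∈ Finset.univ.erase i, (mu i - mu k))
        = ((f.eval (mu i)) * ∏ k ∈ Finset.univ.erase i, ((mu i - mu k)⁻¹ * (lam j - mu k)))
          / ∏ k, (lam j - mu k) := by
      intro i
      rw [hfm i, Finset.prod_mul_distrib, Finset.prod_inv_distrib]
      have hAi : (∏ k, (lam j - mu k))
          = (lam j - mu i) * ∏ k ∈ Finset.univ.erase i, (lam j - mu k) :=
        (Finset.mul_prod_erase _ _ (Finset.mem_univ i)).symm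
      have hji : lam j - mu i ≠ 0 := sub_ne_zero_of_ne (hlm j i)
      have hE : (∏ k ∈ Finset.univ.erase i, (lam j - mu k)) ≠ 0 :=
        Finset.prod_ne_zero_iff.2 fun k _ => sub_ne_zero_of_ne (hlm j k)
      rw [hAi]
      field_simp
    rw [Finset.sum_congr rfl fun i _ => hstep i, ← Finset.sum_div, ← heval, hfl,
      neg_div, div_self hA]
  rw [hsum, Finset.prod_div_distrib]
  have hAj : (∏ k, (lam j - mu k))
      = (lam j - mu j) * ∏ k ∈ Finset.univ.erase j, (lam j - mu k) :=
    (Finset.mul_prod_erase _ _ (Finset.mem_univ j)).symm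
  rw [hAj]
  field_simp
  ring
end
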